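/- The Koranyi norm |(z,u)| := (|z|⁴ + 16u²)^{1/4} satisfies the triangle inequality |g₁g₂| ≤ |g₁| + |g₂| for all g₁, g₂ ∈ ℍ_n, and hence d_K(g₁,g₂) := |g₁⁻¹g₂| is a left-invariant metric on ℍ_n. -/

import Mathlib

/-- The canonical symplectic form `⟨z,w⟩ = ᵗz J w` with `J = [[0,I],[−I,0]]`. -/
noncomputable def symp (n : ℕ) (z w : EuclideanSpace ℝ (Fin n ⊕ Fin n)) : ℝ :=
  ∑ i : Fin n, z (Sum.inl i) * w (Sum.inr i) - ∑ i : Fin n, z (Sum.inr i) * w (Sum.inl i)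

/-- The Heisenberg product on `ℝ^{2n} × ℝ`. -/
noncomputable def Hmul (n : ℕ) (a b : EuclideanSpace ℝ (Fin n ⊕ Fin n) × ℝ) :
    EuclideanSpace ℝ (Fin n ⊕ Fin n) × ℝ :=
  (a.1 + b.1, a.2 + b.2 + (1 / 2) * symp n a.1 b.1)

/-- The Koranyi norm `|(z,u)| = (|z|⁴ + 16u²)^{1/4}`. -/
noncomputable def kor (n : ℕ) (g : EuclideanSpace ℝ (Fin n ⊕ Fin n) × ℝ) : ℝ :=
  (‖g.1‖ ^ 4 + 16 * g.2 ^ 2) ^ ((1 : ℝ) / 4)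

/-- The Koranyi metric `d_K(g₁,g₂) = |g₁⁻¹ g₂|`. -/
noncomputable def dK (n : ℕ) (g₁ g₂ : EuclideanSpace ℝ (Fin n ⊕ Fin n) × ℝ) : ℝ :=
  kor n (Hmul n (-g₁.1, -g₁.2) g₂)

section aux
variable {n : ℕ}

lemma symp_add_left (z z' w : EuclideanSpace ℝ (Fin n ⊕ Fin n)) :
    symp n (z + z') w = symp n z w + symp n z' w := by
  simp [symp, add_mul, Finset.sum_add_distrib]; ring

lemma symp_add_right (z w w' : EuclideanSpace ℝ (Fin n ⊕ Fin n)) :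
    symp n z (w + w') = symp n z w + symp n z w' := by
  simp [symp, mul_add, Finset.sum_add_distrib]; ring

lemma symp_neg_left (z w : EuclideanSpace ℝ (Fin n ⊕ Fin n)) :
    symp n (-z) w = - symp n z w := by
  simp [symp]; ring

lemma symp_neg_right (z w : EuclideanSpace ℝ (Fin n ⊕ Fin n)) :
    symp n z (-w) = - symp n z w := by
  simp [symp]; ring

lemma symp_antisymm (z w : EuclideanSpace ℝ (Fin n ⊕ Fin n)) :
    symp n z w = - symp n w z := by
  simp only [symp, mul_comm]; ring

lemma symp_self (z : EuclideanSpace ℝ (Fin n ⊕ Fin n)) : symp n z z = 0 := by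
  simp only [symp, mul_comm]; ring

lemma key_cs (z w : EuclideanSpace ℝ (Fin n ⊕ Fin n)) :
    (inner ℝ z w : ℝ) ^ 2 + (symp n z w) ^ 2 ≤ ‖z‖ ^ 2 * ‖w‖ ^ 2 := by
  set F : EuclideanSpace ℝ (Fin n ⊕ Fin n) → EuclideanSpace ℂ (Fin n) :=
    fun z => WithLp.toLp 2 (fun i => (⟨z (Sum.inl i), z (Sum.inr i)⟩ : ℂ)) with hF
  have hinner : (inner ℂ (F z) (F w) : ℂ) = ⟨(inner ℝ z w : ℝ), symp n z w⟩ := by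
    apply Complex.ext
    · simp [PiLp.inner_apply, hF, RCLike.inner_apply, Complex.mul_re, symp, Fintype.sum_sum_type]
      rw [Finset.sum_add_distrib]
    · simp [PiLp.inner_apply, hF, RCLike.inner_apply, Complex.mul_im, symp, Fintype.sum_sum_type]
      rw [Finset.sum_add_distrib]; simp [sub_eq_add_neg]
      simp only [mul_comm]; ring
  have hnorm : ∀ v : EuclideanSpace ℝ (Fin n ⊕ Fin n), ‖F v‖ = ‖v‖ := by
    intro v
    rw [EuclideanSpace.norm_eq, EuclideanSpace.norm_eq]
    congr 1
    rw [Fintype.sum_sum_type]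
    rw [← Finset.sum_add_distrib]
    apply Finset.sum_congr rfl
    intro i _
    simp [hF, Complex.sq_norm, Complex.normSq_mk]
    ring
  have h := norm_inner_le_norm (𝕜 := ℂ) (F z) (F w)
  rw [hinner, hnorm, hnorm] at h
  have h2 := mul_self_le_mul_self (norm_nonneg _) h
  calc (inner ℝ z w : ℝ) ^ 2 + (symp n z w) ^ 2
      = Complex.normSq ⟨(inner ℝ z w : ℝ), symp n z w⟩ := by
        simp [Complex.normSq_mk]; ring
    _ = ‖(⟨(inner ℝ z w : ℝ), symp n z w⟩ : ℂ)‖ * ‖(⟨(inner ℝ z w : ℝ), symp n z w⟩ : ℂ)‖ := by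
        rw [← Complex.sq_norm]; ring
    _ ≤ (‖z‖ * ‖w‖) * (‖z‖ * ‖w‖) := h2
    _ = ‖z‖ ^ 2 * ‖w‖ ^ 2 := by ring

lemma kor_nonneg (g : EuclideanSpace ℝ (Fin n ⊕ Fin n) × ℝ) : 0 ≤ kor n g :=
  Real.rpow_nonneg (by positivity) _

lemma kor_sq (g : EuclideanSpace ℝ (Fin n ⊕ Fin n) × ℝ) :
    kor n g ^ 2 = Real.sqrt (‖g.1‖ ^ 4 + 16 * g.2 ^ 2) := by
  rw [kor, ← Real.rpow_natCast (_ ^ ((1:ℝ)/4)) 2, ← Real.rpow_mul (by positivity),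
    Real.sqrt_eq_rpow]
  norm_num

lemma norm_sq_le_kor_sq (g : EuclideanSpace ℝ (Fin n ⊕ Fin n) × ℝ) :
    ‖g.1‖ ^ 2 ≤ kor n g ^ 2 := by
  rw [kor_sq]
  rw [show ‖g.1‖ ^ 2 = Real.sqrt ((‖g.1‖ ^ 2) ^ 2) from (Real.sqrt_sq (by positivity)).symm]
  apply Real.sqrt_le_sqrt
  nlinarith [sq_nonneg g.2]

lemma kor_triangle (g₁ g₂ : EuclideanSpace ℝ (Fin n ⊕ Fin n) × ℝ) :
    kor n (Hmul n g₁ g₂) ≤ kor n g₁ + kor n g₂ := by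
  obtain ⟨z₁, u₁⟩ := g₁
  obtain ⟨z₂, u₂⟩ := g₂
  set a := kor n (z₁, u₁) with ha
  set b := kor n (z₂, u₂) with hb
  have hab : 0 ≤ a + b := add_nonneg (kor_nonneg _) (kor_nonneg _)
  -- reduce to fourth powers
  rw [kor]
  have h4 : ((a + b) ^ 4) ^ ((1:ℝ)/4) = a + b := by
    rw [← Real.rpow_natCast (a+b) 4, ← Real.rpow_mul hab]
    norm_num
  rw [← h4]
  apply Real.rpow_le_rpow (by positivity) _ (by norm_num)
  -- now show X ≤ (a+b)^4
  have hX : (0:ℝ) ≤ ‖(Hmul n (z₁,u₁) (z₂,u₂)).1‖ ^ 4 + 16 * (Hmul n (z₁,u₁) (z₂,u₂)).2 ^ 2 := by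
    positivity
  rw [show (a + b) ^ 4 = ((a+b)^2)^2 by ring]
  have hsq : Real.sqrt (‖(Hmul n (z₁,u₁) (z₂,u₂)).1‖ ^ 4 + 16 * (Hmul n (z₁,u₁) (z₂,u₂)).2 ^ 2)
      ≤ (a + b) ^ 2 := by
    -- main estimate via complex numbers
    set P : ℝ := (inner ℝ z₁ z₂ : ℝ) with hP
    set S : ℝ := symp n z₁ z₂ with hS
    have hz : ‖(Hmul n (z₁,u₁) (z₂,u₂)).1‖ ^ 2 = ‖z₁‖ ^ 2 + ‖z₂‖ ^ 2 + 2 * P := by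
      simp only [Hmul]
      rw [norm_add_sq_real, ← hP]
      ring
    have hu : (Hmul n (z₁,u₁) (z₂,u₂)).2 = u₁ + u₂ + S / 2 := by
      simp only [Hmul, hS]; ring
    set C : ℝ := ‖z₁‖ ^ 2 + ‖z₂‖ ^ 2 + 2 * P with hC
    set D : ℝ := 4 * u₁ + 4 * u₂ + 2 * S with hD
    have hCD : ‖(Hmul n (z₁,u₁) (z₂,u₂)).1‖ ^ 4 + 16 * (Hmul n (z₁,u₁) (z₂,u₂)).2 ^ 2
        = C ^ 2 + D ^ 2 := by
      rw [show ‖(Hmul n (z₁,u₁) (z₂,u₂)).1‖ ^ 4 = (‖(Hmul n (z₁,u₁) (z₂,u₂)).1‖ ^ 2)^2 by ring,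
        hz, hu]
      ring
    rw [hCD]
    -- sqrt(C²+D²) = |w₁ + w₂ + q|
    have habs : Real.sqrt (C ^ 2 + D ^ 2) = ‖(⟨C, D⟩ : ℂ)‖ := by
      rw [Complex.norm_def, Complex.normSq_mk]; ring_nf
    rw [habs]
    have hsplit : (⟨C, D⟩ : ℂ) = ⟨‖z₁‖^2, 4*u₁⟩ + ⟨‖z₂‖^2, 4*u₂⟩ + ⟨2*P, 2*S⟩ := by
      apply Complex.ext <;> simp [hC, hD]
    rw [hsplit]
    have t1 : ‖(⟨‖z₁‖^2, 4*u₁⟩ : ℂ)‖ = a ^ 2 := by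
      rw [Complex.norm_def, Complex.normSq_mk, ha, kor_sq]
      congr 1; ring
    have t2 : ‖(⟨‖z₂‖^2, 4*u₂⟩ : ℂ)‖ = b ^ 2 := by
      rw [Complex.norm_def, Complex.normSq_mk, hb, kor_sq]
      congr 1; ring
    have t3 : ‖(⟨2*P, 2*S⟩ : ℂ)‖ ≤ 2 * (a * b) := by
      rw [Complex.norm_def, Complex.normSq_mk]
      have h1 : (2*P) * (2*P) + (2*S) * (2*S) ≤ (2 * (‖z₁‖ * ‖z₂‖))^2 := by
        have := key_cs z₁ z₂
        rw [← hP, ← hS] at this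
        nlinarith
      have h2 : Real.sqrt ((2*P) * (2*P) + (2*S) * (2*S)) ≤ 2 * (‖z₁‖ * ‖z₂‖) := by
        rw [show 2 * (‖z₁‖ * ‖z₂‖) = Real.sqrt ((2 * (‖z₁‖ * ‖z₂‖))^2) from
          (Real.sqrt_sq (by positivity)).symm]
        exact Real.sqrt_le_sqrt h1
      refine h2.trans ?_
      have a1 : ‖z₁‖ ≤ a := by
        have := norm_sq_le_kor_sq (n := n) (z₁, u₁)
        rw [← ha] at this
        nlinarith [norm_nonneg z₁, kor_nonneg (n := n) (z₁, u₁), ha]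
      have b1 : ‖z₂‖ ≤ b := by
        have := norm_sq_le_kor_sq (n := n) (z₂, u₂)
        rw [← hb] at this
        nlinarith [norm_nonneg z₂, kor_nonneg (n := n) (z₂, u₂), hb]
      have := mul_le_mul a1 b1 (norm_nonneg z₂) (ha ▸ kor_nonneg _)
      linarith
    calc ‖(⟨‖z₁‖^2, 4*u₁⟩ + ⟨‖z₂‖^2, 4*u₂⟩ + ⟨2*P, 2*S⟩ : ℂ)‖
        ≤ ‖(⟨‖z₁‖^2, 4*u₁⟩ : ℂ)‖ + ‖(⟨‖z₂‖^2, 4*u₂⟩ : ℂ)‖ + ‖(⟨2*P, 2*S⟩ : ℂ)‖ := by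
          refine (norm_add_le _ _).trans ?_
          gcongr
          exact norm_add_le _ _
      _ ≤ a^2 + b^2 + 2*(a*b) := by rw [t1, t2]; linarith [t3]
      _ = (a + b)^2 := by ring
  calc ‖(Hmul n (z₁,u₁) (z₂,u₂)).1‖ ^ 4 + 16 * (Hmul n (z₁,u₁) (z₂,u₂)).2 ^ 2
      = Real.sqrt (‖(Hmul n (z₁,u₁) (z₂,u₂)).1‖ ^ 4 + 16 * (Hmul n (z₁,u₁) (z₂,u₂)).2 ^ 2) ^ 2 := by
        rw [Real.sq_sqrt hX]
    _ ≤ ((a+b)^2)^2 := by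
        apply pow_le_pow_left₀ (Real.sqrt_nonneg _) hsq



lemma kor_neg (w : EuclideanSpace ℝ (Fin n ⊕ Fin n)) (v : ℝ) :
    kor n (-w, -v) = kor n (w, v) := by
  simp [kor]

lemma kor_zero : kor n (0, 0) = 0 := by
  simp [kor]

lemma kor_eq_zero {w : EuclideanSpace ℝ (Fin n ⊕ Fin n)} {v : ℝ}
    (h : kor n (w, v) = 0) : w = 0 ∧ v = 0 := by
  rw [kor] at h
  have h0 : ‖w‖ ^ 4 + 16 * v ^ 2 = 0 := by
    by_contra hne
    have hpos : 0 < ‖(w, v).1‖ ^ 4 + 16 * (w, v).2 ^ 2 := by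
      rcases lt_or_eq_of_le (by positivity : (0:ℝ) ≤ ‖w‖ ^ 4 + 16 * v ^ 2) with h' | h'
      · exact h'
      · exact absurd h'.symm hne
    have := Real.rpow_pos_of_pos hpos ((1:ℝ)/4)
    simp only at h
    linarith [this, h.le, this.le]
  have h1 : ‖w‖ ^ 4 = 0 := by nlinarith [sq_nonneg v, pow_nonneg (norm_nonneg w) 4]
  have h2 : v ^ 2 = 0 := by nlinarith [pow_nonneg (norm_nonneg w) 4]
  refine ⟨norm_eq_zero.mp ?_, ?_⟩
  · exact pow_eq_zero_iff (n := 4) (by norm_num) |>.mp h1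
  · exact pow_eq_zero_iff (n := 2) (by norm_num) |>.mp h2

theorem koranyi_triangle_and_metric (n : ℕ) :
    (∀ g₁ g₂ : EuclideanSpace ℝ (Fin n ⊕ Fin n) × ℝ,
      kor n (Hmul n g₁ g₂) ≤ kor n g₁ + kor n g₂) ∧
    (∀ g, dK n g g = 0) ∧
    (∀ g₁ g₂, dK n g₁ g₂ = 0 → g₁ = g₂) ∧
    (∀ g₁ g₂, dK n g₁ g₂ = dK n g₂ g₁) ∧
    (∀ g₁ g₂ g₃, dK n g₁ g₃ ≤ dK n g₁ g₂ + dK n g₂ g₃) ∧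
    (∀ h g₁ g₂, dK n (Hmul n h g₁) (Hmul n h g₂) = dK n g₁ g₂) := by
  refine ⟨kor_triangle, ?_, ?_, ?_, ?_, ?_⟩
  · intro g
    have : Hmul n (-g.1, -g.2) g = (0, 0) := by
      apply Prod.ext
      · simp [Hmul]
      · simp [Hmul, symp_neg_left, symp_self]
    rw [dK, this, kor_zero]
  · intro g₁ g₂ h
    rw [dK] at h
    have h2 := kor_eq_zero (w := (Hmul n (-g₁.1, -g₁.2) g₂).1) (v := (Hmul n (-g₁.1, -g₁.2) g₂).2)
      (by simpa using h)
    obtain ⟨hw, hv⟩ := h2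
    simp only [Hmul] at hw hv
    have hz : g₁.1 = g₂.1 := neg_add_eq_zero.mp hw
    rw [hz, symp_neg_left, symp_self] at hv
    exact Prod.ext hz (by linarith [hv])
  · intro g₁ g₂
    have : Hmul n (-g₂.1, -g₂.2) g₁ = (-(Hmul n (-g₁.1, -g₁.2) g₂).1, -(Hmul n (-g₁.1, -g₁.2) g₂).2) := by
      apply Prod.ext
      · simp only [Hmul]
        module
      · simp only [Hmul, symp_neg_left]
        rw [symp_antisymm g₂.1 g₁.1]
        ring
    rw [dK, dK, this]
    exact (kor_neg _ _).symm
  · intro g₁ g₂ g₃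
    have key : Hmul n (Hmul n (-g₁.1, -g₁.2) g₂) (Hmul n (-g₂.1, -g₂.2) g₃)
        = Hmul n (-g₁.1, -g₁.2) g₃ := by
      apply Prod.ext
      · simp only [Hmul]
        module
      · simp only [Hmul, symp_add_left, symp_add_right, symp_neg_left, symp_neg_right, symp_self]
        ring
    calc dK n g₁ g₃ = kor n (Hmul n (Hmul n (-g₁.1, -g₁.2) g₂) (Hmul n (-g₂.1, -g₂.2) g₃)) := by
          rw [dK, key]
      _ ≤ _ := kor_triangle _ _
  · intro h g₁ g₂
    have key : Hmul n (-(Hmul n h g₁).1, -(Hmul n h g₁).2) (Hmul n h g₂)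
        = Hmul n (-g₁.1, -g₁.2) g₂ := by
      apply Prod.ext
      · simp only [Hmul]
        module
      · simp only [Hmul, symp_add_left, symp_add_right, symp_neg_left, symp_neg_right, symp_self]
        linear_combination (-(1/2)) * symp_antisymm (n := n) g₁.1 h.1
    rw [dK, dK, key]
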